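/- Let S be a type, Q a finite type of locations with subsets Q₀ (initial) and Q_F (accepting), Δ : Q → Q → Φ a transition labeling by predicates over S, and ξ = (x_0, …, x_l) ∈ S^{l+1} a trace. Define the (max,+) weight of ξ as w⁺(ξ) = sup over all location sequences (q_0, …, q_{l+1}) with q_0 ∈ Q₀ and q_{l+1} ∈ Q_F of Σ_{t=0}^{l} λ⁺(x_t, Δ(q_t, q_{t+1})) (supremum in EReal, equal to -∞ if no such sequence exists). Then w⁺(ξ) = 0 if and only if ξ ⊨ A, i.e., there exists a sequence (q_0, …, q_{l+1}) with q_0 ∈ Q₀, q_{l+1} ∈ Q_F, and x_t ⊨ Δ(q_t, q_{t+1}) for all 0 ≤ t ≤ l. -/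
import Mathlib


/-- Predicates over a state space `S`:
`φ ::= ⊤ | ⊥ | (μ ≥ 0) | φ ∧ φ | φ ∨ φ` where each atom carries `μ : S → ℝ`. -/
inductive Phi (S : Type*) where
  | top : Phi S
  | bot : Phi S
  | atom (μ : S → ℝ) : Phi S
  | and (φ₁ φ₂ : Phi S) : Phi S
  | or (φ₁ φ₂ : Phi S) : Phi S

/-- Satisfaction `s ⊨ φ` of a predicate by a state. -/
def Phi.Sat {S : Type*} (s : S) : Phi S → Prop
  | .top => True
  | .bot => False
  | .atom μ => μ s ≥ 0
  | .and φ₁ φ₂ => φ₁.Sat s ∧ φ₂.Sat s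
  | .or φ₁ φ₂ => φ₁.Sat s ∨ φ₂.Sat s

/-- The `(max,+)` generalized weight `λ⁺ : S × Φ → EReal`. -/
noncomputable def lamP {S : Type*} (s : S) : Phi S → EReal
  | .top => 0
  | .bot => ⊥
  | .atom μ => if μ s ≥ 0 then 0 else ((μ s : ℝ) : EReal)
  | .and φ₁ φ₂ => lamP s φ₁ + lamP s φ₂
  | .or φ₁ φ₂ => max (lamP s φ₁) (lamP s φ₂)



lemma lamP_nonpos {S : Type*} (s : S) : ∀ φ : Phi S, lamP s φ ≤ 0
  | .top => le_refl _
  | .bot => bot_le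
  | .atom μ => by
      simp only [lamP]; split
      · exact le_refl _
      · exact_mod_cast le_of_not_ge (by assumption)
  | .and φ₁ φ₂ => by
      have h₁ := lamP_nonpos s φ₁; have h₂ := lamP_nonpos s φ₂
      calc lamP s (φ₁.and φ₂) = lamP s φ₁ + lamP s φ₂ := rfl
        _ ≤ 0 + 0 := add_le_add h₁ h₂
        _ = 0 := by simp
  | .or φ₁ φ₂ => max_le (lamP_nonpos s φ₁) (lamP_nonpos s φ₂)

lemma lamP_eq_zero_iff {S : Type*} (s : S) : ∀ φ : Phi S, lamP s φ = 0 ↔ Phi.Sat s φ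
  | .top => by simp [lamP, Phi.Sat]
  | .bot => by simp [lamP, Phi.Sat]
  | .atom μ => by
      simp only [lamP, Phi.Sat]; split
      next h => simpa using h
      next h =>
        constructor
        · intro e
          have h0 : μ s = 0 := by exact_mod_cast e
          exact absurd h0.ge h
        · intro hh; exact absurd hh h
  | .and φ₁ φ₂ => by
      have h₁ := lamP_nonpos s φ₁; have h₂ := lamP_nonpos s φ₂
      simp only [Phi.Sat, ← lamP_eq_zero_iff s φ₁, ← lamP_eq_zero_iff s φ₂]
      show lamP s φ₁ + lamP s φ₂ = 0 ↔ _
      constructor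
      · intro h
        have ha : (0:EReal) ≤ lamP s φ₁ := by
          calc (0:EReal) = lamP s φ₁ + lamP s φ₂ := h.symm
            _ ≤ lamP s φ₁ + 0 := add_le_add le_rfl h₂
            _ = lamP s φ₁ := by simp
        have hb : (0:EReal) ≤ lamP s φ₂ := by
          calc (0:EReal) = lamP s φ₁ + lamP s φ₂ := h.symm
            _ ≤ 0 + lamP s φ₂ := add_le_add h₁ le_rfl
            _ = lamP s φ₂ := by simp
        exact ⟨le_antisymm h₁ ha, le_antisymm h₂ hb⟩
      · rintro ⟨e₁, e₂⟩; simp [e₁, e₂]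
  | .or φ₁ φ₂ => by
      simp only [Phi.Sat, ← lamP_eq_zero_iff s φ₁, ← lamP_eq_zero_iff s φ₂]
      show max (lamP s φ₁) (lamP s φ₂) = 0 ↔ _
      constructor
      · intro h
        rcases max_cases (lamP s φ₁) (lamP s φ₂) with ⟨e, _⟩ | ⟨e, _⟩
        · exact Or.inl (e ▸ h)
        · exact Or.inr (e ▸ h)
      · rintro (e | e)
        · exact le_antisymm (max_le (lamP_nonpos s φ₁) (lamP_nonpos s φ₂)) (e ▸ le_max_left _ _)
        · exact le_antisymm (max_le (lamP_nonpos s φ₁) (lamP_nonpos s φ₂)) (e ▸ le_max_right _ _)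

lemma sum_eq_zero_iff_of_nonpos' {ι : Type*} (s : Finset ι) (f : ι → EReal)
    (h : ∀ i ∈ s, f i ≤ 0) : ∑ i ∈ s, f i = 0 ↔ ∀ i ∈ s, f i = 0 := by
  classical
  constructor
  · intro hs i hi
    have hrest : ∑ j ∈ s.erase i, f j ≤ 0 :=
      Finset.sum_nonpos fun j hj => h j (Finset.mem_of_mem_erase hj)
    have : (0:EReal) ≤ f i := by
      calc (0:EReal) = f i + ∑ j ∈ s.erase i, f j := by
            rw [Finset.add_sum_erase s f hi, hs]
        _ ≤ f i + 0 := add_le_add le_rfl hrest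
        _ = f i := by simp
    exact le_antisymm (h i hi) this
  · exact Finset.sum_eq_zero

/-- **The `(max,+)` trace weight vanishes exactly on accepted traces.**
For a symbolic automaton with finitely many locations `Q`, initial locations
`Q₀`, accepting locations `Q_F`, and transition labels `Δ`, and a trace
`x = (x 0, …, x l)`, define `w⁺(ξ)` as the supremum (in `EReal`, `= -∞` if no
such sequence exists) over all location sequences `q : Fin (l+2) → Q` with
`q 0 ∈ Q₀` and `q (l+1) ∈ Q_F` of `Σ_{t=0}^{l} λ⁺(x t, Δ (q t) (q (t+1)))`.
Then `w⁺(ξ) = 0` iff `ξ ⊨ A`, i.e., there is such a sequence with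
`x t ⊨ Δ (q t) (q (t+1))` for all `0 ≤ t ≤ l`. -/
theorem maxplus_trace_weight_eq_zero_iff_accepted
    {S Q : Type*} [Fintype Q] (Q₀ QF : Set Q) (Δ : Q → Q → Phi S)
    (l : ℕ) (x : Fin (l + 1) → S) :
    (⨆ q : {q : Fin (l + 2) → Q // q 0 ∈ Q₀ ∧ q (Fin.last (l + 1)) ∈ QF},
        ∑ t : Fin (l + 1), lamP (x t) (Δ (q.1 t.castSucc) (q.1 t.succ))) = 0 ↔
      ∃ q : Fin (l + 2) → Q, q 0 ∈ Q₀ ∧ q (Fin.last (l + 1)) ∈ QF ∧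
        ∀ t : Fin (l + 1), Phi.Sat (x t) (Δ (q t.castSucc) (q t.succ)) := by
  set ι := {q : Fin (l + 2) → Q // q 0 ∈ Q₀ ∧ q (Fin.last (l + 1)) ∈ QF}
  set f : ι → EReal := fun q => ∑ t : Fin (l + 1), lamP (x t) (Δ (q.1 t.castSucc) (q.1 t.succ))
    with hf
  have hnp : ∀ q : ι, f q ≤ 0 := fun q =>
    Finset.sum_nonpos fun t _ => lamP_nonpos _ _
  have hzero : ∀ q : ι, f q = 0 ↔
      ∀ t : Fin (l + 1), Phi.Sat (x t) (Δ (q.1 t.castSucc) (q.1 t.succ)) := by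
    intro q
    rw [sum_eq_zero_iff_of_nonpos' _ _ (fun t _ => lamP_nonpos _ _)]
    simp [lamP_eq_zero_iff]
  constructor
  · intro h
    have hne : Nonempty ι := by
      by_contra hne
      rw [not_nonempty_iff] at hne
      rw [iSup_of_empty] at h
      exact absurd h (by simp)
    have : Finite ι := Subtype.finite
    obtain ⟨q, hq⟩ := Finite.exists_max f
    have hle : ⨆ i, f i ≤ f q := iSup_le hq
    rw [h] at hle
    have : f q = 0 := le_antisymm (hnp q) hle
    exact ⟨q.1, q.2.1, q.2.2, (hzero q).mp this⟩
  · rintro ⟨q, h0, hF, hsat⟩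
    have hq : f ⟨q, h0, hF⟩ = 0 := (hzero ⟨q, h0, hF⟩).mpr hsat
    refine le_antisymm (iSup_le hnp) ?_
    rw [← hq]
    exact le_iSup f ⟨q, h0, hF⟩
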